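/- The polynomial 1 + (−x⁷ + 4x⁶ − 8x⁴ + 4x² − x)·y² + x⁸·y⁴ is irreducible in ℚ(x)[y], hence irreducible in ℤ[x,y]. -/

import Mathlib

open Polynomial

namespace Aux16

noncomputable section

abbrev R := Polynomial ℤ
abbrev S := Polynomial R

def g : R := -X^6 + 4*X^5 - 8*X^3 + 4*X - 1
def f2 : R := -X^7 + 4*X^6 - 8*X^4 + 4*X^2 - X

lemma f2_eq : f2 = X * g := by unfold f2 g; ring

lemma X_ne : (X : R) ≠ 0 := X_ne_zero

lemma Xdvd {p : R} (h : p.eval 0 = 0) : X ∣ p :=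
  X_dvd_iff.mpr (by rwa [coeff_zero_eq_eval_zero])

lemma g0 : g.eval 0 = -1 := by simp [g]

lemma f20 : f2.eval 0 = 0 := by simp [f2]

/-- descent: if `B * D = X ^ n` and `D.eval 0 = -1` then `D` is invertible. -/
lemma descent (D : R) (hD : D.eval 0 = -1) :
    ∀ n (B : R), B * D = X ^ n → ∃ B', B' * D = 1 := by
  intro n
  induction n with
  | zero => intro B h; exact ⟨B, by simpa using h⟩
  | succ n ih =>
    intro B h
    have h0 : B.eval 0 = 0 := by
      have h' := congrArg (Polynomial.eval 0) h
      simp [hD] at h'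
      linarith
    obtain ⟨B1, rfl⟩ := Xdvd h0
    apply ih B1
    have hc : (X : R) * (B1 * D) = X * X ^ n := by linear_combination h
    exact mul_left_cancel₀ X_ne hc

lemma ab0 (B D : R) (hm : B * D = X^6) (hs : B + D = g) (hD : D.eval 0 = -1) : False := by
  obtain ⟨B', hB'⟩ := descent D hD 6 B hm
  obtain ⟨r, hr, hCr⟩ := Polynomial.isUnit_iff.mp (IsUnit.of_mul_eq_one (a := D) B' (by linear_combination hB'))
  have hr1 : r = -1 := by
    have h' := congrArg (Polynomial.eval 0) hCr
    simpa [hD] using h'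
  have hDval : D = -1 := by rw [← hCr, hr1]; simp
  have hB : B = g + 1 := by linear_combination hs - hDval
  rw [hB, hDval] at hm
  have h2 := congrArg (Polynomial.eval 2) hm
  simp [g] at h2

lemma pair (b d : R) (hm : b * d = X^8) (hs : b + d = f2) : False := by
  have hb0 : b.eval 0 = 0 ∧ d.eval 0 = 0 := by
    have h1 := congrArg (Polynomial.eval 0) hm
    have h2 := congrArg (Polynomial.eval 0) hs
    simp [f2] at h1 h2
    rcases h1 with h | h <;> constructor <;> linarith
  obtain ⟨B, rfl⟩ := Xdvd hb0.1
  obtain ⟨D, rfl⟩ := Xdvd hb0.2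
  have hm' : B * D = (X:R)^6 :=
    mul_left_cancel₀ (pow_ne_zero 2 X_ne) (by linear_combination hm)
  have hs' : B + D = g :=
    mul_left_cancel₀ X_ne (by linear_combination hs + f2_eq)
  have hm0 := congrArg (Polynomial.eval 0) hm'
  have hs0 := congrArg (Polynomial.eval 0) hs'
  simp [g0] at hm0 hs0
  rcases hm0 with hB0 | hD0
  · exact ab0 B D hm' hs' (by linarith)
  · exact ab0 D B (by linear_combination hm') (by linear_combination hs') (by linarith)

lemma no_root (r : R) : r^4 + f2 * r^2 + X^8 ≠ 0 := by
  intro h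
  have h0 : r.eval 0 = 0 := by
    have h' := congrArg (Polynomial.eval 0) h
    simp [f2] at h'
    nlinarith [h', sq_nonneg (r.eval 0), sq_nonneg (r.eval 0 ^ 2)]
  obtain ⟨s, rfl⟩ := Xdvd h0
  rw [f2_eq] at h
  have h1 : (X:R) * s^4 + g * s^2 + X^5 = 0 :=
    mul_left_cancel₀ (pow_ne_zero 3 X_ne) (by linear_combination h)
  have h10 : s.eval 0 = 0 := by
    have h' := congrArg (Polynomial.eval 0) h1
    simp [g0] at h'
    nlinarith [h', sq_nonneg (s.eval 0)]
  obtain ⟨t, rfl⟩ := Xdvd h10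
  have h2 : (X:R)^3 * t^4 + g * t^2 + X^3 = 0 :=
    mul_left_cancel₀ (pow_ne_zero 2 X_ne) (by linear_combination h1)
  have h20 : t.eval 0 = 0 := by
    have h' := congrArg (Polynomial.eval 0) h2
    simp [g0] at h'
    nlinarith [h', sq_nonneg (t.eval 0)]
  obtain ⟨u, rfl⟩ := Xdvd h20
  have h3 : (X:R)^5 * u^4 + g * u^2 + X = 0 :=
    mul_left_cancel₀ (pow_ne_zero 2 X_ne) (by linear_combination h2)
  have h30 : u.eval 0 = 0 := by
    have h' := congrArg (Polynomial.eval 0) h3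
    simp [g0] at h'
    nlinarith [h', sq_nonneg (u.eval 0)]
  obtain ⟨v, rfl⟩ := Xdvd h30
  have h4 : (X:R)^8 * v^4 + X * g * v^2 + 1 = 0 :=
    mul_left_cancel₀ X_ne (by linear_combination h3)
  have h' := congrArg (Polynomial.eval 0) h4
  simp [g0] at h'

lemma nsq1 (a : R) : a * a ≠ X^7 - 4*X^6 + 10*X^4 - 4*X^2 + X := by
  intro h
  have hd : (X^7 - 4*X^6 + 10*X^4 - 4*X^2 + X : R).natDegree = 7 := by compute_degree!
  have ha : a ≠ 0 := by rintro rfl; rw [mul_zero] at h; rw [← h] at hd; simp at hd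
  have hmul := natDegree_mul ha ha
  rw [h, hd] at hmul
  omega

lemma nsq2 (a : R) : a * a ≠ X^7 - 4*X^6 + 6*X^4 - 4*X^2 + X := by
  intro h
  have hd : (X^7 - 4*X^6 + 6*X^4 - 4*X^2 + X : R).natDegree = 7 := by compute_degree!
  have ha : a ≠ 0 := by rintro rfl; rw [mul_zero] at h; rw [← h] at hd; simp at hd
  have hmul := natDegree_mul ha ha
  rw [h, hd] at hmul
  omega

def q : S := X^4 + C f2 * X^2 + C ((X:R)^8)

lemma natDegree_q : q.natDegree = 4 := by unfold q; compute_degree!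

lemma monic_q : q.Monic := by
  rw [Monic, leadingCoeff, natDegree_q]
  unfold q
  simp only [coeff_add, coeff_C_mul, coeff_X_pow, coeff_C, coeff_X]
  norm_num

lemma quad_case (a1 a0 b1 b0 : R)
    (h : ((X:S)^2 + C a1 * X + C a0) * ((X:S)^2 + C b1 * X + C b0) = q) : False := by
  have h' : (X:S)^4 + C (a1+b1) * X^3 + C (a0+b0+a1*b1) * X^2 + C (a1*b0+a0*b1) * X
      + C (a0*b0) = q := by
    rw [← h]; simp only [map_add, map_mul]; ring
  have e3 : a1 + b1 = 0 := by
    have := congrArg (fun p => Polynomial.coeff p 3) h'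
    simp only [q, coeff_add, coeff_C_mul, coeff_X_pow, coeff_C, coeff_X] at this
    norm_num at this
    exact this
  have e2 : a0 + b0 + a1*b1 = f2 := by
    have := congrArg (fun p => Polynomial.coeff p 2) h'
    simp only [q, coeff_add, coeff_C_mul, coeff_X_pow, coeff_C, coeff_X] at this
    norm_num at this
    exact this
  have e1 : a1*b0 + a0*b1 = 0 := by
    have := congrArg (fun p => Polynomial.coeff p 1) h'
    simp only [q, coeff_add, coeff_C_mul, coeff_X_pow, coeff_C, coeff_X] at this
    norm_num at this
    exact this
  have e0 : a0 * b0 = (X:R)^8 := by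
    have := congrArg (fun p => Polynomial.coeff p 0) h'
    simp only [q, coeff_add, coeff_C_mul, coeff_X_pow, coeff_C, coeff_X] at this
    norm_num at this
    exact this
  rcases mul_eq_zero.mp (show a1 * (b0 - a0) = 0 by linear_combination e1 - a0 * e3) with ha1 | hba
  · exact pair a0 b0 e0 (by linear_combination e2 - b1 * ha1)
  · -- b0 = a0, so a0 ^ 2 = X ^ 8
    have hb0 : b0 = a0 := by linear_combination hba
    rcases mul_eq_zero.mp (show (a0 - X^4) * (a0 + X^4) = (0:R) by
        linear_combination e0 - a0 * hba) with h4 | h4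
    · refine nsq1 a1 ?_
      have ha0 : a0 = X^4 := by linear_combination h4
      have hf : f2 = -X^7+4*X^6-8*X^4+4*X^2-X := rfl
      linear_combination a1 * e3 - e2 - hf + 2 * ha0 + hb0
    · refine nsq2 a1 ?_
      have ha0 : a0 = -X^4 := by linear_combination h4
      have hf : f2 = -X^7+4*X^6-8*X^4+4*X^2-X := rfl
      linear_combination a1 * e3 - e2 - hf + 2 * ha0 + hb0

lemma monic_quad (p : S) (hm : p.Monic) (h2 : p.natDegree = 2) :
    p = (X:S)^2 + C (p.coeff 1) * X + C (p.coeff 0) := by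
  refine Polynomial.ext fun n => ?_
  match n with
  | 0 => simp
  | 1 => simp [coeff_X_pow]
  | 2 =>
    have hc := hm.coeff_natDegree
    rw [h2] at hc
    simp [hc, coeff_X_pow, coeff_C]
  | (n+3) =>
    have hz : p.coeff (n+3) = 0 := coeff_eq_zero_of_natDegree_lt (by omega)
    rw [hz]
    simp only [coeff_add, coeff_C_mul, coeff_X_pow, coeff_C, coeff_X]
    rw [if_neg (by omega), if_neg (by omega), if_neg (by omega)]
    ring

lemma key (a b : S) (ha : a.Monic) (hb : b.Monic) (hda : a.natDegree ≠ 0)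
    (hdb : b.natDegree ≠ 0) (hdeg : a.natDegree + b.natDegree = 4) (h : a * b = q) :
    False := by
  have root : ∀ c e : S, c.Monic → c.natDegree = 1 → c * e = q → False := by
    intro c e hc h1 he
    have hc' := hc.eq_X_add_C h1
    set r := c.coeff 0 with hr
    have hev : Polynomial.eval (-r) q = 0 := by
      rw [← he, hc']; simp
    simp [q] at hev
    exact no_root r (by linear_combination hev)
  rcases (by omega : a.natDegree = 1 ∨ a.natDegree = 2 ∨ a.natDegree = 3) with h1 | h2 | h3
  · exact root a b ha h1 h
  · have hb2 : b.natDegree = 2 := by omega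
    have ea := monic_quad a ha h2
    have eb := monic_quad b hb hb2
    rw [ea, eb] at h
    exact quad_case _ _ _ _ h
  · have hb1 : b.natDegree = 1 := by omega
    exact root b a hb hb1 (by rw [← h]; ring)

lemma q_irred : Irreducible q := by
  refine ⟨fun hu => ?_, fun a b h => ?_⟩
  · have := natDegree_eq_zero_of_isUnit hu
    rw [natDegree_q] at this
    exact absurd this (by norm_num)
  · by_contra hc
    push_neg at hc
    obtain ⟨hna, hnb⟩ := hc
    have ha0 : a ≠ 0 := by rintro rfl; exact monic_q.ne_zero (by rw [h, zero_mul])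
    have hb0 : b ≠ 0 := by rintro rfl; exact monic_q.ne_zero (by rw [h, mul_zero])
    have hdeg : a.natDegree + b.natDegree = 4 := by
      have hm := natDegree_mul ha0 hb0
      rw [← h, natDegree_q] at hm
      omega
    have hlc : a.leadingCoeff * b.leadingCoeff = 1 := by
      have hm := leadingCoeff_mul a b
      rw [← h, monic_q.leadingCoeff] at hm
      exact hm.symm
    have hda : a.natDegree ≠ 0 := by
      intro h0
      apply hna
      rw [eq_C_of_natDegree_eq_zero h0]
      refine isUnit_C.mpr (IsUnit.of_mul_eq_one b.leadingCoeff ?_)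
      rw [← hlc]
      congr 1
      rw [leadingCoeff, h0]
    have hdb : b.natDegree ≠ 0 := by
      intro h0
      apply hnb
      rw [eq_C_of_natDegree_eq_zero h0]
      refine isUnit_C.mpr (IsUnit.of_mul_eq_one a.leadingCoeff ?_)
      rw [mul_comm, ← hlc]
      congr 1
      rw [leadingCoeff, h0]
    obtain ⟨r, hr, hCr⟩ := Polynomial.isUnit_iff.mp (IsUnit.of_mul_eq_one _ hlc)
    rcases Int.isUnit_iff.mp hr with rfl | rfl
    · have hma : a.Monic := by rw [Monic, ← hCr, map_one]
      have hmb : b.Monic := by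
        rw [Monic]
        have := hlc
        rw [← hCr, map_one, one_mul] at this
        exact this
      exact key a b hma hmb hda hdb hdeg h.symm
    · have hma : (-a).Monic := by
        rw [Monic, leadingCoeff_neg, ← hCr]
        simp
      have hmb : (-b).Monic := by
        have hb' : b.leadingCoeff = -1 := by
          have hx := hlc
          rw [← hCr] at hx
          have hy : (-1 : R) * b.leadingCoeff = 1 := by simpa using hx
          linear_combination -hy
        rw [Monic, leadingCoeff_neg, hb']
        norm_num
      refine key (-a) (-b) hma hmb ?_ ?_ ?_ ?_
      · rwa [natDegree_neg]
      · rwa [natDegree_neg]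
      · rwa [natDegree_neg, natDegree_neg]
      · show -a * -b = q
        rw [h]
        ring

def Q : S := C ((X:R)^8) * X^4 + C f2 * X^2 + 1

lemma natDegree_Q : Q.natDegree = 4 := by
  unfold Q
  compute_degree!

lemma Q_coeff0 : Q.coeff 0 = 1 := by
  unfold Q
  simp [coeff_X_pow, coeff_C]

lemma rev_Q : Q.reverse = q := by
  rw [reverse, natDegree_Q]
  rw [show Q = C ((X:R)^8) * X^4 + C f2 * X^2 + (1:S) from rfl]
  rw [reflect_add, reflect_add, reflect_C_mul_X_pow, reflect_C_mul_X_pow, reflect_one]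
  rw [revAt_le (by norm_num : (4:ℕ) ≤ 4), revAt_le (by norm_num : (2:ℕ) ≤ 4)]
  norm_num [q]
  ring

lemma Q_irred : Irreducible Q := by
  refine ⟨fun hu => ?_, fun a b h => ?_⟩
  · have := natDegree_eq_zero_of_isUnit hu
    rw [natDegree_Q] at this
    exact absurd this (by norm_num)
  · by_contra hc
    push_neg at hc
    obtain ⟨hna, hnb⟩ := hc
    have hQ0 : Q ≠ 0 := fun h0 => by
      have hq := Q_coeff0
      rw [h0] at hq
      simp at hq
    have ha0 : a ≠ 0 := by rintro rfl; rw [zero_mul] at h; exact hQ0 h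
    have hb0 : b ≠ 0 := by rintro rfl; rw [mul_zero] at h; exact hQ0 h
    have hrev : a.reverse * b.reverse = q := by
      rw [← reverse_mul_of_domain, ← h, rev_Q]
    have c0 : a.coeff 0 * b.coeff 0 = 1 := by
      have := mul_coeff_zero a b
      rw [← h, Q_coeff0] at this
      exact this.symm
    have ca0 : a.coeff 0 ≠ 0 := fun hz => by rw [hz, zero_mul] at c0; exact one_ne_zero c0.symm
    have cb0 : b.coeff 0 ≠ 0 := fun hz => by rw [hz, mul_zero] at c0; exact one_ne_zero c0.symm
    rcases q_irred.isUnit_or_isUnit hrev.symm with hu | hu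
    · apply hna
      have h1 : a.reverse.natDegree = 0 := natDegree_eq_zero_of_isUnit hu
      have h2 : a.natTrailingDegree = 0 := natTrailingDegree_eq_zero.mpr (Or.inr ca0)
      have h3 : a.natDegree = 0 := by
        rw [reverse_natDegree, h2] at h1
        omega
      rw [eq_C_of_natDegree_eq_zero h3]
      exact isUnit_C.mpr (IsUnit.of_mul_eq_one _ c0)
    · apply hnb
      have h1 : b.reverse.natDegree = 0 := natDegree_eq_zero_of_isUnit hu
      have h2 : b.natTrailingDegree = 0 := natTrailingDegree_eq_zero.mpr (Or.inr cb0)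
      have h3 : b.natDegree = 0 := by
        rw [reverse_natDegree, h2] at h1
        omega
      rw [eq_C_of_natDegree_eq_zero h3]
      exact isUnit_C.mpr (IsUnit.of_mul_eq_one _ (by rw [mul_comm] at c0; exact c0))

open MvPolynomial in
def Φ : MvPolynomial (Fin 2) ℤ ≃+* Polynomial (Polynomial ℤ) :=
  (renameEquiv ℤ (Equiv.swap (0 : Fin 2) 1)).toRingEquiv.trans
    ((MvPolynomial.finSuccEquiv ℤ 1).toRingEquiv.trans
      (Polynomial.mapEquiv ((MvPolynomial.finSuccEquiv ℤ 0).toRingEquiv.trans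
        (Polynomial.mapEquiv (MvPolynomial.isEmptyRingEquiv ℤ (Fin 0))))))

lemma Φ_X1 : Φ (MvPolynomial.X 1) = (Polynomial.X : S) := by
  rw [Φ]
  simp only [RingEquiv.coe_trans, Function.comp_apply, AlgEquiv.toRingEquiv_eq_coe,
    AlgEquiv.coe_ringEquiv, MvPolynomial.renameEquiv_apply, MvPolynomial.rename_X,
    Equiv.swap_apply_right, MvPolynomial.finSuccEquiv_X_zero, Polynomial.mapEquiv_apply,
    Polynomial.map_X]

lemma Φ_X0 : Φ (MvPolynomial.X 0) = (C (X : R) : S) := by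
  have h01 : (Equiv.swap (0 : Fin 2) 1) 0 = Fin.succ 0 := by
    rw [Equiv.swap_apply_left]; rfl
  rw [Φ]
  simp only [RingEquiv.coe_trans, Function.comp_apply, AlgEquiv.toRingEquiv_eq_coe,
    AlgEquiv.coe_ringEquiv, MvPolynomial.renameEquiv_apply, MvPolynomial.rename_X,
    h01, MvPolynomial.finSuccEquiv_X_succ, Polynomial.mapEquiv_apply,
    Polynomial.map_C, MvPolynomial.finSuccEquiv_X_zero, Polynomial.map_X]
  congr 1
  simp [MvPolynomial.finSuccEquiv_X_zero]

end

end Aux16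

open MvPolynomial

theorem stmt_16 :
    Irreducible
      (1 + (-(X 0) ^ 7 + 4 * (X 0) ^ 6 - 8 * (X 0) ^ 4 + 4 * (X 0) ^ 2 - X 0) * (X 1) ^ 2
        + (X 0) ^ 8 * (X 1) ^ 4 : MvPolynomial (Fin 2) ℤ) := by
  rw [← MulEquiv.irreducible_iff Aux16.Φ]
  have hmap : Aux16.Φ
      (1 + (-(X 0) ^ 7 + 4 * (X 0) ^ 6 - 8 * (X 0) ^ 4 + 4 * (X 0) ^ 2 - X 0) * (X 1) ^ 2
        + (X 0) ^ 8 * (X 1) ^ 4 : MvPolynomial (Fin 2) ℤ) = Aux16.Q := by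
    simp only [map_add, map_sub, map_mul, map_pow, map_one, map_neg, map_ofNat,
      Aux16.Φ_X0, Aux16.Φ_X1]
    unfold Aux16.Q Aux16.f2
    simp only [map_add, map_sub, map_mul, map_pow, map_neg, map_ofNat]
    ring
  rw [hmap]
  exact Aux16.Q_irred
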